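/- Integrating the modified Hamiltonian with the same method and step reproduces the exact flow (concrete instance for the harmonic oscillator): let h ≠ 0 with cos h ≠ 0, and let Ĥ_SE(P,Q) = (sin h·(P² + Q²)/2 + (1 − cos h)·P·Q)/(h·cos h). Then for every (p₀,q₀) ∈ ℝ², the symplectic Euler equations p₁ = p₀ − h·∂Ĥ_SE/∂Q(p₁, q₀), q₁ = q₀ + h·∂Ĥ_SE/∂P(p₁, q₀) have the unique solution p₁ = p₀·cos h − q₀·sin h, q₁ = p₀·sin h + q₀·cos h, i.e. one symplectic Euler step of size h applied to Ĥ_SE equals the exact time-h flow of the harmonic oscillator. -/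

import Mathlib

noncomputable section

def HSE (h P Q : ℝ) : ℝ :=
  (Real.sin h * (P ^ 2 + Q ^ 2) / 2 + (1 - Real.cos h) * P * Q) / (h * Real.cos h)

lemma derivQ (h P q : ℝ) :
    deriv (fun Q => HSE h P Q) q = (Real.sin h * q + (1 - Real.cos h) * P) / (h * Real.cos h) := by
  have : HasDerivAt (fun Q => HSE h P Q)
      ((Real.sin h * q + (1 - Real.cos h) * P) / (h * Real.cos h)) q := by
    have h1 : HasDerivAt (fun Q : ℝ => Real.sin h * (P ^ 2 + Q ^ 2) / 2 + (1 - Real.cos h) * P * Q)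
        (Real.sin h * q + (1 - Real.cos h) * P) q := by
      have := ((hasDerivAt_pow 2 q).const_add (P ^ 2)).const_mul (Real.sin h)
      have h2 := (this.div_const 2).add ((hasDerivAt_id q).const_mul ((1 - Real.cos h) * P))
      exact h2.congr_deriv (by push_cast; ring)
    exact h1.div_const _
  exact this.deriv

lemma derivP (h q P : ℝ) :
    deriv (fun P => HSE h P q) P = (Real.sin h * P + (1 - Real.cos h) * q) / (h * Real.cos h) := by
  have : HasDerivAt (fun P => HSE h P q)
      ((Real.sin h * P + (1 - Real.cos h) * q) / (h * Real.cos h)) P := by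
    have h1 : HasDerivAt (fun P : ℝ => Real.sin h * (P ^ 2 + q ^ 2) / 2 + (1 - Real.cos h) * P * q)
        (Real.sin h * P + (1 - Real.cos h) * q) P := by
      have := ((hasDerivAt_pow 2 P).add_const (q ^ 2)).const_mul (Real.sin h)
      have h2 := (this.div_const 2).add
        (((hasDerivAt_id P).const_mul (1 - Real.cos h)).mul_const q)
      exact h2.congr_deriv (by push_cast; ring)
    exact h1.div_const _
  exact this.deriv

/-- one symplectic Euler step of size `h` applied to the modified
Hamiltonian `Ĥ_SE` equals the exact time-`h` flow of the harmonic oscillator: the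
implicit equations `p₁ = p₀ − h·∂Ĥ_SE/∂Q(p₁, q₀)`, `q₁ = q₀ + h·∂Ĥ_SE/∂P(p₁, q₀)` have
the unique solution `(p₁, q₁) = (p₀ cos h − q₀ sin h, p₀ sin h + q₀ cos h)`. -/
theorem stmt10 (h : ℝ) (hh : h ≠ 0) (hcos : Real.cos h ≠ 0) :
    ∀ p₀ q₀ p₁ q₁ : ℝ,
      (p₁ = p₀ - h * deriv (fun Q => HSE h p₁ Q) q₀ ∧
        q₁ = q₀ + h * deriv (fun P => HSE h P q₀) p₁) ↔
      (p₁ = p₀ * Real.cos h - q₀ * Real.sin h ∧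
        q₁ = p₀ * Real.sin h + q₀ * Real.cos h) := by
  intro p₀ q₀ p₁ q₁
  rw [derivQ, derivP]
  have hsc : Real.sin h ^ 2 + Real.cos h ^ 2 = 1 := Real.sin_sq_add_cos_sq h
  have hhc : h * Real.cos h ≠ 0 := mul_ne_zero hh hcos
  constructor
  · rintro ⟨e1, e2⟩
    have key1 : h * (p₁ - (p₀ * Real.cos h - q₀ * Real.sin h)) = 0 := by
      field_simp at e1
      linear_combination h * e1
    have hp : p₁ = p₀ * Real.cos h - q₀ * Real.sin h := by
      rcases mul_eq_zero.1 key1 with h' | h'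
      · exact absurd h' hh
      · linarith
    refine ⟨hp, ?_⟩
    subst hp
    field_simp at e2
    have key2 : (h * Real.cos h) * (q₁ - (p₀ * Real.sin h + q₀ * Real.cos h)) = 0 := by
      linear_combination h * e2 - h * q₀ * hsc
    rcases mul_eq_zero.1 key2 with h' | h'
    · exact absurd h' hhc
    · linarith
  · rintro ⟨hp, hq⟩
    subst hp hq
    constructor
    · field_simp
      ring
    · field_simp
      linear_combination q₀ * hsc
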